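/- arXiv:1601.02109 — 5 statements merged into one kernel-verified Lean document; each statement's English description precedes it below -/
import Mathlib

section
/- For every ε > 0 there exists S such that for all integers s ≥ S, R₂(s) ≤ 1/2 + ε (i.e., limsup_{s→∞} R₂(s) ≤ 1/2). -/
open scoped Classical

noncomputable section

/-- The 2×2 submatrix of `M` on rows `i, j` and columns `k, l`. -/
def sub2 {s : ℕ} (M : Matrix (Fin s) (Fin s) (ZMod 2)) (i j k l : Fin s) :
    Matrix (Fin 2) (Fin 2) (ZMod 2) := !![M i k, M i l; M j k, M j l]

/-- `N2 M` is the number of invertible 2×2 submatrices of `M`, i.e. the number of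
quadruples `(i, j, k, l)` with `i < j`, `k < l` such that the 2×2 submatrix of `M`
on rows `i, j` and columns `k, l` is invertible over `𝔽₂`. -/
def N2 {s : ℕ} (M : Matrix (Fin s) (Fin s) (ZMod 2)) : ℕ :=
  (Finset.univ.filter (fun q : Fin s × Fin s × Fin s × Fin s =>
    q.1 < q.2.1 ∧ q.2.2.1 < q.2.2.2 ∧ IsUnit (sub2 M q.1 q.2.1 q.2.2.1 q.2.2.2))).card

/-- `R2 M = N2 M / (C(s,2))²`. -/
def R2 {s : ℕ} (M : Matrix (Fin s) (Fin s) (ZMod 2)) : ℝ :=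
  (N2 M : ℝ) / ((s.choose 2 : ℝ)) ^ 2

/-- `R2max s` is the maximum of `R2 M` over all invertible `s × s` matrices over `𝔽₂`. -/
def R2max (s : ℕ) : ℝ :=
  sSup {r : ℝ | ∃ M : Matrix (Fin s) (Fin s) (ZMod 2), IsUnit M ∧ r = R2 M}

/-! ### Auxiliary lemmas -/

lemma aux_sum_pairs {s : ℕ} (f : Fin s → Fin s → ℤ) (hs : ∀ i j, f i j = f j i) :
    ∑ i, ∑ j, f i j =
      2 * ∑ p ∈ Finset.univ.filter (fun p : Fin s × Fin s => p.1 < p.2), f p.1 p.2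
        + ∑ i, f i i := by
  classical
  have h1 : ∑ i, ∑ j, f i j = ∑ p : Fin s × Fin s, f p.1 p.2 := by
    rw [← Finset.sum_product']
    rfl
  rw [h1, ← Finset.sum_filter_add_sum_filter_not Finset.univ (fun p : Fin s × Fin s => p.1 < p.2)]
  have h2 : Finset.univ.filter (fun p : Fin s × Fin s => ¬ p.1 < p.2)
      = (Finset.univ.filter (fun p : Fin s × Fin s => p.2 < p.1)) ∪
        (Finset.univ.filter (fun p : Fin s × Fin s => p.1 = p.2)) := by
    ext p
    simp only [Finset.mem_filter, Finset.mem_union, Finset.mem_univ, true_and]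
    omega
  have hdisj : Disjoint (Finset.univ.filter (fun p : Fin s × Fin s => p.2 < p.1))
      (Finset.univ.filter (fun p : Fin s × Fin s => p.1 = p.2)) := by
    refine Finset.disjoint_left.2 fun p hp hq => ?_
    simp only [Finset.mem_filter, Finset.mem_univ, true_and] at hp hq
    omega
  rw [h2, Finset.sum_union hdisj]
  have h3 : ∑ p ∈ Finset.univ.filter (fun p : Fin s × Fin s => p.2 < p.1), f p.1 p.2
      = ∑ p ∈ Finset.univ.filter (fun p : Fin s × Fin s => p.1 < p.2), f p.1 p.2 := by
    refine Finset.sum_nbij' (fun p => Prod.swap p) (fun p => Prod.swap p) ?_ ?_ ?_ ?_ ?_ <;>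
      simp [hs _ _]
  have h4 : ∑ p ∈ Finset.univ.filter (fun p : Fin s × Fin s => p.1 = p.2), f p.1 p.2
      = ∑ i, f i i := by
    refine Finset.sum_nbij' (fun p => p.1) (fun i => (i, i)) ?_ ?_ ?_ ?_ ?_ <;> simp
  rw [h3, h4]
  ring

lemma aux_unit_iff (a b c d : ZMod 2) : IsUnit (!![a, b; c, d]) ↔ a * d + b * c = 1 := by
  rw [Matrix.isUnit_iff_isUnit_det, Matrix.det_fin_two_of, isUnit_iff_ne_zero]
  revert a b c d; decide

lemma aux_chi_eval (a b c d : ZMod 2) :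
    (if a * d + b * c = 1 then (1 : ℤ) else 0)
      = (a.val : ℤ) * d.val + (b.val : ℤ) * c.val
        - 2 * ((a.val : ℤ) * b.val) * ((c.val : ℤ) * d.val) := by
  revert a b c d; decide

def wcol {s : ℕ} (M : Matrix (Fin s) (Fin s) (ZMod 2)) (k : Fin s) : ℤ :=
  ∑ i, ((M i k).val : ℤ)

def rrow {s : ℕ} (M : Matrix (Fin s) (Fin s) (ZMod 2)) (i : Fin s) : ℤ :=
  ∑ k, ((M i k).val : ℤ)

def dcol {s : ℕ} (M : Matrix (Fin s) (Fin s) (ZMod 2)) (k l : Fin s) : ℤ :=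
  ∑ i, ((M i k).val : ℤ) * ((M i l).val : ℤ)

lemma aux_ordered_sum {s : ℕ} (M : Matrix (Fin s) (Fin s) (ZMod 2)) (k l : Fin s) :
    ∑ i, ∑ j, (if IsUnit (sub2 M i j k l) then (1 : ℤ) else 0)
      = 2 * (wcol M k * wcol M l - dcol M k l * dcol M k l) := by
  have h : ∀ i j : Fin s, (if IsUnit (sub2 M i j k l) then (1 : ℤ) else 0)
      = ((M i k).val : ℤ) * (M j l).val + ((M i l).val : ℤ) * (M j k).val
        - 2 * (((M i k).val : ℤ) * (M i l).val) * (((M j k).val : ℤ) * (M j l).val) := by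
    intro i j
    rw [show sub2 M i j k l = !![M i k, M i l; M j k, M j l] from rfl]
    simp only [aux_unit_iff]
    rw [aux_chi_eval]
  simp only [h]
  simp only [Finset.sum_sub_distrib, Finset.sum_add_distrib, ← Finset.mul_sum,
    ← Finset.sum_mul, ← Finset.mul_sum]
  show wcol M k * wcol M l + wcol M l * wcol M k - 2 * dcol M k l * dcol M k l = _
  ring

lemma aux_chi_swap (a b c d : ZMod 2) :
    (if IsUnit (!![c, d; a, b]) then (1 : ℤ) else 0)
      = (if IsUnit (!![a, b; c, d]) then (1 : ℤ) else 0) := by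
  simp only [aux_unit_iff]
  have : c * b + d * a = a * d + b * c := by ring
  rw [this]

lemma aux_chi_diag (a b : ZMod 2) :
    (if IsUnit (!![a, b; a, b]) then (1 : ℤ) else 0) = 0 := by
  simp only [aux_unit_iff]
  revert a b; decide

/-- the row-pair sum of the invertibility indicator for a fixed column pair. -/
lemma aux_pair_sum {s : ℕ} (M : Matrix (Fin s) (Fin s) (ZMod 2)) (k l : Fin s) :
    ∑ p ∈ Finset.univ.filter (fun p : Fin s × Fin s => p.1 < p.2),
        (if IsUnit (sub2 M p.1 p.2 k l) then (1 : ℤ) else 0)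
      = wcol M k * wcol M l - dcol M k l * dcol M k l := by
  have hsymm : ∀ i j : Fin s, (if IsUnit (sub2 M i j k l) then (1 : ℤ) else 0)
      = (if IsUnit (sub2 M j i k l) then (1 : ℤ) else 0) := by
    intro i j
    exact (aux_chi_swap (M i k) (M i l) (M j k) (M j l)).symm
  have hdiag : ∀ i : Fin s, (if IsUnit (sub2 M i i k l) then (1 : ℤ) else 0) = 0 := by
    intro i
    exact aux_chi_diag (M i k) (M i l)
  have := aux_sum_pairs (fun i j => if IsUnit (sub2 M i j k l) then (1 : ℤ) else 0)
    (fun i j => hsymm i j)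
  rw [aux_ordered_sum] at this
  simp only [hdiag, Finset.sum_const_zero, add_zero] at this
  linarith

lemma aux_ite_and (P Q R : Prop) [Decidable P] [Decidable Q] [Decidable R] :
    (if P ∧ Q ∧ R then (1 : ℤ) else 0)
      = if Q then (if P ∧ R then (1 : ℤ) else 0) else 0 := by
  split_ifs <;> tauto

/-- `N2` as a sum over column pairs. -/
lemma aux_N2_eq {s : ℕ} (M : Matrix (Fin s) (Fin s) (ZMod 2)) :
    (N2 M : ℤ) = ∑ q ∈ Finset.univ.filter (fun q : Fin s × Fin s => q.1 < q.2),
      (wcol M q.1 * wcol M q.2 - dcol M q.1 q.2 * dcol M q.1 q.2) := by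
  classical
  have h0 : (N2 M : ℤ) = ∑ i, ∑ j, ∑ k, ∑ l,
      (if i < j ∧ k < l ∧ IsUnit (sub2 M i j k l) then (1:ℤ) else 0) := by
    rw [N2, Finset.card_filter, Nat.cast_sum]
    simp only [apply_ite (Nat.cast : ℕ → ℤ), Nat.cast_one, Nat.cast_zero,
      Fintype.sum_prod_type]
  have hsumif : ∀ g : Fin s → Fin s → ℤ,
      ∑ p ∈ Finset.univ.filter (fun p : Fin s × Fin s => p.1 < p.2), g p.1 p.2
        = ∑ i, ∑ j, (if i < j then g i j else 0) := by
    intro g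
    rw [Finset.sum_filter, Fintype.sum_prod_type]
  have h1 : ∀ i j : Fin s, ∑ k, ∑ l, (if i < j ∧ k < l ∧ IsUnit (sub2 M i j k l)
        then (1:ℤ) else 0)
      = if i < j then (∑ q ∈ Finset.univ.filter (fun q : Fin s × Fin s => q.1 < q.2),
          (if IsUnit (sub2 M i j q.1 q.2) then (1:ℤ) else 0)) else 0 := by
    intro i j
    rw [hsumif (fun a b => if IsUnit (sub2 M i j a b) then (1:ℤ) else 0)]
    by_cases h : i < j
    · simp only [h, true_and, if_true]
      refine Finset.sum_congr rfl fun k _ => Finset.sum_congr rfl fun l _ => ?_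
      split_ifs <;> tauto
    · simp [h]
  rw [h0]
  rw [Finset.sum_congr rfl fun i _ => Finset.sum_congr rfl fun j _ => h1 i j]
  rw [← hsumif (fun a b => ∑ q ∈ Finset.univ.filter (fun q : Fin s × Fin s => q.1 < q.2),
    (if IsUnit (sub2 M a b q.1 q.2) then (1:ℤ) else 0))]
  rw [Finset.sum_comm]
  refine Finset.sum_congr rfl fun q _ => ?_
  exact aux_pair_sum M q.1 q.2

lemma aux_val_sq (a : ZMod 2) : (a.val : ℤ) * a.val = a.val := by revert a; decide

lemma aux_val_le_one (a : ZMod 2) : (a.val : ℤ) ≤ 1 := by revert a; decide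

lemma aux_facts {s : ℕ} (M : Matrix (Fin s) (Fin s) (ZMod 2)) :
    (N2 M : ℤ) = (∑ q ∈ Finset.univ.filter (fun q : Fin s × Fin s => q.1 < q.2),
        wcol M q.1 * wcol M q.2)
      - ∑ q ∈ Finset.univ.filter (fun q : Fin s × Fin s => q.1 < q.2),
        (dcol M q.1 q.2)^2 := by
  rw [aux_N2_eq, Finset.sum_sub_distrib]
  congr 1
  refine Finset.sum_congr rfl fun q _ => ?_
  ring

lemma aux_f2 {s : ℕ} (M : Matrix (Fin s) (Fin s) (ZMod 2)) :
    2 * (∑ q ∈ Finset.univ.filter (fun q : Fin s × Fin s => q.1 < q.2),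
      wcol M q.1 * wcol M q.2) ≤ (∑ i, rrow M i)^2 := by
  have hsymm : ∀ k l : Fin s, wcol M k * wcol M l = wcol M l * wcol M k := fun k l => mul_comm _ _
  have h := aux_sum_pairs (fun k l => wcol M k * wcol M l) hsymm
  have h1 : ∑ k, ∑ l, wcol M k * wcol M l = (∑ k, wcol M k)^2 := by
    rw [sq, Finset.sum_mul_sum]
  have h2 : ∑ k, wcol M k = ∑ i, rrow M i := by
    unfold wcol rrow; rw [Finset.sum_comm]
  have h3 : 0 ≤ ∑ i : Fin s, wcol M i * wcol M i :=
    Finset.sum_nonneg fun i _ => mul_self_nonneg _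
  rw [h1, h2] at h
  linarith

lemma aux_f3 {s : ℕ} (M : Matrix (Fin s) (Fin s) (ZMod 2)) :
    2 * (∑ q ∈ Finset.univ.filter (fun q : Fin s × Fin s => q.1 < q.2), dcol M q.1 q.2)
      = (∑ i, (rrow M i)^2) - ∑ i, rrow M i := by
  have hsymm : ∀ k l : Fin s, dcol M k l = dcol M l k := by
    intro k l
    unfold dcol
    exact Finset.sum_congr rfl fun i _ => mul_comm _ _
  have h := aux_sum_pairs (dcol M) hsymm
  have h1 : ∑ k, ∑ l, dcol M k l = ∑ i, (rrow M i)^2 := by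
    unfold dcol
    calc ∑ k, ∑ l, ∑ i, ((M i k).val : ℤ) * ((M i l).val : ℤ)
        = ∑ k, ∑ i, ∑ l, ((M i k).val : ℤ) * ((M i l).val : ℤ) :=
          Finset.sum_congr rfl fun k _ => Finset.sum_comm ..
      _ = ∑ i, ∑ k, ∑ l, ((M i k).val : ℤ) * ((M i l).val : ℤ) := Finset.sum_comm ..
      _ = ∑ i, (rrow M i)^2 := by
          refine Finset.sum_congr rfl fun i _ => ?_
          rw [rrow, sq, Finset.sum_mul_sum]
  have h2 : ∑ k, dcol M k k = ∑ i, rrow M i := by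
    unfold dcol rrow
    rw [Finset.sum_comm]
    exact Finset.sum_congr rfl fun i _ => Finset.sum_congr rfl fun k _ => aux_val_sq _
  rw [h1, h2] at h
  linarith

lemma aux_card {s : ℕ} :
    2 * ((Finset.univ.filter (fun p : Fin s × Fin s => p.1 < p.2)).card : ℤ)
      = (s:ℤ)^2 - s := by
  have h := aux_sum_pairs (fun (_ _ : Fin s) => (1:ℤ)) (fun _ _ => rfl)
  simp [Finset.sum_const, mul_comm] at h
  push_cast at h ⊢
  nlinarith [h]

lemma aux_val_nonneg (a : ZMod 2) : (0:ℤ) ≤ (a.val : ℤ) := Int.ofNat_nonneg _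

lemma aux_T_nonneg {s : ℕ} (M : Matrix (Fin s) (Fin s) (ZMod 2)) :
    0 ≤ ∑ i, rrow M i :=
  Finset.sum_nonneg fun i _ => Finset.sum_nonneg fun k _ => aux_val_nonneg _

lemma aux_T_le {s : ℕ} (M : Matrix (Fin s) (Fin s) (ZMod 2)) :
    ∑ i, rrow M i ≤ (s:ℤ)^2 := by
  have h : ∀ i : Fin s, rrow M i ≤ (s:ℤ) := by
    intro i
    calc rrow M i ≤ ∑ _k : Fin s, (1:ℤ) := Finset.sum_le_sum fun k _ => aux_val_le_one _
      _ = (s:ℤ) := by simp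
  calc ∑ i, rrow M i ≤ ∑ _i : Fin s, (s:ℤ) := Finset.sum_le_sum fun i _ => h i
    _ = (s:ℤ)^2 := by simp [sq]

lemma aux_D_nonneg {s : ℕ} (M : Matrix (Fin s) (Fin s) (ZMod 2)) :
    0 ≤ ∑ q ∈ Finset.univ.filter (fun q : Fin s × Fin s => q.1 < q.2), dcol M q.1 q.2 :=
  Finset.sum_nonneg fun q _ => Finset.sum_nonneg fun i _ =>
    mul_nonneg (aux_val_nonneg _) (aux_val_nonneg _)

lemma aux_Q_nonneg {s : ℕ} (M : Matrix (Fin s) (Fin s) (ZMod 2)) :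
    0 ≤ ∑ q ∈ Finset.univ.filter (fun q : Fin s × Fin s => q.1 < q.2), (dcol M q.1 q.2)^2 :=
  Finset.sum_nonneg fun q _ => sq_nonneg _


lemma aux_real (ε n t W Q D Sr c : ℝ) (hε : 0 < ε) (hs : 8 / ε + 5 ≤ n)
    (r2 : 2 * W ≤ t^2) (r3 : 2 * D = Sr - t) (r4 : D^2 ≤ c * Q)
    (r5 : t^2 ≤ n * Sr) (r6 : 0 ≤ D) (r7 : 0 ≤ t) (r8 : t ≤ n^2)
    (r9 : 2 * c = n^2 - n) (r10 : 0 ≤ Q) :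
    W - Q ≤ (1/2 + ε) * c^2 := by
  have hn5 : 5 ≤ n := by
    have : 0 ≤ 8 / ε := by positivity
    linarith
  have hnpos : (0:ℝ) < n := by linarith
  have hn25 : 5*n ≤ n*n := mul_le_mul_of_nonneg_right hn5 (by linarith)
  have hcpos : 0 < c := by linarith [hn25, r9]
  have hQD : c * (W - Q) ≤ c * (t^2/2) - D^2 := by
    have h := mul_le_mul_of_nonneg_left r2 hcpos.le
    linarith [h, r4]
  rcases le_or_gt t n with hcase | hcase
  · -- small t
    have ht2 : t*t ≤ n*n := mul_le_mul hcase hcase r7 hnpos.le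
    have h1 : W - Q ≤ n^2/2 := by linarith [r2, r10, ht2]
    have hnn5 : (0:ℝ) ≤ n*(n-5) := mul_nonneg hnpos.le (by linarith)
    have hcge : 2*n ≤ c := by linarith [r9, hnn5]
    have hc2 : (2*n)*(2*n) ≤ c*c := mul_le_mul hcge hcge (by linarith) hcpos.le
    have hec : 0 ≤ ε * c^2 := mul_nonneg hε.le (sq_nonneg c)
    linarith [h1, hc2, hec]
  · -- large t
    have hcv : c = (n^2-n)/2 := by linarith
    have hr3n : n * (2 * D) = n * (Sr - t) := by rw [r3]
    have hDlow : t^2 - n*t ≤ 2*n*D := by linarith [r5, hr3n]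
    have hDlow0 : 0 ≤ t^2 - n*t := by
      have := mul_le_mul_of_nonneg_left hcase.le r7
      linarith [this]
    have hD2 : t^2*(t-n)^2 ≤ 4*n^2*D^2 := by
      have hsum : 0 ≤ 2*n*D + (t^2 - n*t) := by
        have : 0 ≤ 2*n*D := by positivity
        linarith
      have hprod := mul_nonneg (sub_nonneg.2 hDlow) hsum
      linarith [hprod]
    have key1 : t^2*(n^4 - t^2) ≤ n^8/4 := by linarith [sq_nonneg (t^2 - n^4/2)]
    have htcube : t^3 ≤ n^6 := by
      calc t^3 ≤ (n^2)^3 := pow_le_pow_left₀ r7 r8 3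
        _ = n^6 := by ring
    have e1 : 2*n*t^3 ≤ 2*n*n^6 := mul_le_mul_of_nonneg_left htcube (by linarith)
    have e2 : (0:ℝ) ≤ n^3*t^2 := by positivity
    have e3 : (0:ℝ) ≤ n^2*t^2 := by positivity
    have key2 : 2*n^2*c*t^2 - t^2*(t-n)^2 ≤ n^8/4 + 2*n^7 := by
      rw [hcv]
      linarith [key1, e1, e2, e3]
    have h11 : 11 + 6*ε ≤ 2*ε*n := by
      have h8 : ε * (8/ε) = 8 := by field_simp
      have h := mul_le_mul_of_nonneg_left hs (le_of_lt hε)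
      linarith [h, h8, hε]
    have key4 : n^8/4 + 2*n^7 ≤ (1+2*ε)*(n^8 - 3*n^7)/4 := by
      have hn7 : (0:ℝ) ≤ n^7 := by positivity
      linarith [mul_le_mul_of_nonneg_right h11 hn7]
    have key3 : (1+2*ε)*(n^8 - 3*n^7)/4 ≤ (2+4*ε)*n^2*c^3 := by
      have hcube : (n^3 - 3*n^2) ≤ (n-1)^3 := by linarith [hnpos]
      have hc3 : c^3 = n^3*(n-1)^3/8 := by rw [hcv]; ring
      rw [hc3]
      have hn5' : (0:ℝ) ≤ n^5 := by positivity
      have hpoly : n^5*(n^3 - 3*n^2) ≤ n^5*(n-1)^3 :=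
        mul_le_mul_of_nonneg_left hcube hn5'
      have h' := mul_le_mul_of_nonneg_left hpoly (show (0:ℝ) ≤ (1+2*ε)/4 by linarith)
      linarith [h']
    have B2 : 4*n^2*(c*(W-Q)) ≤ 2*n^2*c*t^2 - 4*n^2*D^2 := by
      have h := mul_le_mul_of_nonneg_left hQD (show (0:ℝ) ≤ 4*n^2 by positivity)
      linarith [h]
    have B3 : 2*n^2*c*t^2 - 4*n^2*D^2 ≤ 2*n^2*c*t^2 - t^2*(t-n)^2 := by linarith
    have chain : 4*n^2*(c*(W - Q)) ≤ (2+4*ε)*n^2*c^3 :=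
      B2.trans (B3.trans (key2.trans (key4.trans key3)))
    have hfinal : (4*n^2*c) * (W - Q) ≤ (4*n^2*c) * ((1/2+ε)*c^2) := by
      calc (4*n^2*c) * (W - Q) = 4*n^2*(c*(W-Q)) := by ring
        _ ≤ (2+4*ε)*n^2*c^3 := chain
        _ = (4*n^2*c) * ((1/2+ε)*c^2) := by ring
    exact le_of_mul_le_mul_left hfinal (by positivity)

/-- The main bound: for any matrix, `R2 M ≤ 1/2 + ε` once `s` is large. -/
lemma aux_main {s : ℕ} (M : Matrix (Fin s) (Fin s) (ZMod 2)) (ε : ℝ) (hε : 0 < ε)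
    (hs : 8 / ε + 5 ≤ (s : ℝ)) : R2 M ≤ 1 / 2 + ε := by
  classical
  have f1 := aux_facts M
  have f2 := aux_f2 M
  have f4 : (∑ q ∈ Finset.univ.filter (fun q : Fin s × Fin s => q.1 < q.2), dcol M q.1 q.2)^2
      ≤ ((Finset.univ.filter (fun q : Fin s × Fin s => q.1 < q.2)).card : ℤ)
        * ∑ q ∈ Finset.univ.filter (fun q : Fin s × Fin s => q.1 < q.2), (dcol M q.1 q.2)^2 :=
    sq_sum_le_card_mul_sum_sq
  have f5 : (∑ i, rrow M i)^2 ≤ (s:ℤ) * ∑ i, (rrow M i)^2 := by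
    have h := sq_sum_le_card_mul_sum_sq (s := (Finset.univ : Finset (Fin s))) (f := rrow M)
    simpa using h
  have r2 : 2 * ((∑ q ∈ Finset.univ.filter (fun q : Fin s × Fin s => q.1 < q.2),
      wcol M q.1 * wcol M q.2 : ℤ) : ℝ) ≤ ((∑ i, rrow M i : ℤ) : ℝ)^2 := by
    exact_mod_cast f2
  have r3 : 2 * ((∑ q ∈ Finset.univ.filter (fun q : Fin s × Fin s => q.1 < q.2),
      dcol M q.1 q.2 : ℤ) : ℝ) = ((∑ i, (rrow M i)^2 : ℤ) : ℝ) - ((∑ i, rrow M i : ℤ) : ℝ) := by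
    exact_mod_cast aux_f3 M
  have r4 : (((∑ q ∈ Finset.univ.filter (fun q : Fin s × Fin s => q.1 < q.2),
      dcol M q.1 q.2 : ℤ) : ℝ))^2
      ≤ (((Finset.univ.filter (fun q : Fin s × Fin s => q.1 < q.2)).card : ℕ) : ℝ)
        * ((∑ q ∈ Finset.univ.filter (fun q : Fin s × Fin s => q.1 < q.2),
          (dcol M q.1 q.2)^2 : ℤ) : ℝ) := by
    exact_mod_cast f4
  have r5 : (((∑ i, rrow M i : ℤ)) : ℝ)^2 ≤ (s:ℝ) * ((∑ i, (rrow M i)^2 : ℤ) : ℝ) := by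
    exact_mod_cast f5
  have r6 : (0:ℝ) ≤ ((∑ q ∈ Finset.univ.filter (fun q : Fin s × Fin s => q.1 < q.2),
      dcol M q.1 q.2 : ℤ) : ℝ) := by exact_mod_cast aux_D_nonneg M
  have r7 : (0:ℝ) ≤ ((∑ i, rrow M i : ℤ) : ℝ) := by exact_mod_cast aux_T_nonneg M
  have r8 : ((∑ i, rrow M i : ℤ) : ℝ) ≤ (s:ℝ)^2 := by exact_mod_cast aux_T_le M
  have r9 : 2 * (((Finset.univ.filter (fun p : Fin s × Fin s => p.1 < p.2)).card : ℕ) : ℝ)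
      = (s:ℝ)^2 - (s:ℝ) := by exact_mod_cast aux_card (s := s)
  have r10 : (0:ℝ) ≤ ((∑ q ∈ Finset.univ.filter (fun q : Fin s × Fin s => q.1 < q.2),
      (dcol M q.1 q.2)^2 : ℤ) : ℝ) := by exact_mod_cast aux_Q_nonneg M
  have core := aux_real ε (s:ℝ) _ _ _ _ _ _ hε hs r2 r3 r4 r5 r6 r7 r8 r9 r10
  have r1 : (N2 M : ℝ)
      = ((∑ q ∈ Finset.univ.filter (fun q : Fin s × Fin s => q.1 < q.2),
          wcol M q.1 * wcol M q.2 : ℤ) : ℝ)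
        - ((∑ q ∈ Finset.univ.filter (fun q : Fin s × Fin s => q.1 < q.2),
          (dcol M q.1 q.2)^2 : ℤ) : ℝ) := by
    exact_mod_cast congrArg (Int.cast : ℤ → ℝ) f1
  have hn5 : (5:ℝ) ≤ (s:ℝ) := by
    have : 0 ≤ 8 / ε := by positivity
    linarith
  have hchoose : ((s.choose 2 : ℕ) : ℝ)
      = (((Finset.univ.filter (fun p : Fin s × Fin s => p.1 < p.2)).card : ℕ) : ℝ) := by
    rw [Nat.cast_choose_two]
    nlinarith [r9]
  have hcpos : (0:ℝ) < (((Finset.univ.filter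
      (fun p : Fin s × Fin s => p.1 < p.2)).card : ℕ) : ℝ) := by nlinarith
  rw [R2, r1, hchoose, div_le_iff₀ (by positivity)]
  linarith [core]

theorem R2_limsup_le_half :
    ∀ ε : ℝ, 0 < ε → ∃ S : ℕ, ∀ s : ℕ, S ≤ s → R2max s ≤ 1 / 2 + ε := by
  intro ε hε
  refine ⟨⌈8 / ε⌉₊ + 5, fun s hs => ?_⟩
  have hsr : 8 / ε + 5 ≤ (s : ℝ) := by
    have h1 : (8 / ε : ℝ) ≤ (⌈8 / ε⌉₊ : ℝ) := Nat.le_ceil _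
    have h2 : ((⌈8 / ε⌉₊ + 5 : ℕ) : ℝ) ≤ (s : ℝ) := by exact_mod_cast hs
    push_cast at h2
    linarith
  refine Real.sSup_le ?_ (by linarith)
  rintro r ⟨M, _, rfl⟩
  exact aux_main M ε hε hsr
end
end

section
/- Let M be an s×s matrix over 𝔽₂ and let i ≠ j be two row indices. Let x_i and x_j be the number of ones in rows i and j respectively, and let z = |{k : M(i,k) = M(j,k) = 1}|. Then the number of pairs of column indices k < l such that the 2×2 submatrix of M on rows i,j and columns k,l is invertible over 𝔽₂ equals x_i·x_j − z². -/
open scoped Classical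

noncomputable section

lemma isUnit_fin_two_iff (a b c d : ZMod 2) :
    IsUnit (!![a, b; c, d] : Matrix (Fin 2) (Fin 2) (ZMod 2)) ↔
      Xor' (a = 1 ∧ d = 1) (b = 1 ∧ c = 1) := by
  rw [Matrix.isUnit_iff_isUnit_det, Matrix.det_fin_two_of, isUnit_iff_ne_zero]
  revert a b c d; simp only [Xor', Xor]; decide

lemma key {s : ℕ} (M : Matrix (Fin s) (Fin s) (ZMod 2)) (i j k l : Fin s) :
    IsUnit (sub2 M i j k l) ↔
      Xor' (M i k = 1 ∧ M j l = 1) (M i l = 1 ∧ M j k = 1) := by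
  rw [sub2, isUnit_fin_two_iff]

theorem pair_count_eq (s : ℕ) (M : Matrix (Fin s) (Fin s) (ZMod 2)) (i j : Fin s)
    (hij : i ≠ j)
    (xi xj z : ℕ)
    (hxi : xi = (Finset.univ.filter (fun k : Fin s => M i k = 1)).card)
    (hxj : xj = (Finset.univ.filter (fun k : Fin s => M j k = 1)).card)
    (hz : z = (Finset.univ.filter (fun k : Fin s => M i k = 1 ∧ M j k = 1)).card) :
    (((Finset.univ.filter (fun q : Fin s × Fin s =>
        q.1 < q.2 ∧ IsUnit (sub2 M i j q.1 q.2))).card : ℤ)) =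
      (xi : ℤ) * (xj : ℤ) - (z : ℤ) ^ 2 := by
  classical
  set P : Finset (Fin s × Fin s) :=
    Finset.univ.filter (fun q => M i q.1 = 1 ∧ M j q.2 = 1) with hP
  set Q : Finset (Fin s × Fin s) :=
    Finset.univ.filter (fun q => M i q.2 = 1 ∧ M j q.1 = 1) with hQ
  set T : Finset (Fin s × Fin s) :=
    Finset.univ.filter (fun q => IsUnit (sub2 M i j q.1 q.2)) with hT
  set S : Finset (Fin s × Fin s) :=
    Finset.univ.filter (fun q => q.1 < q.2 ∧ IsUnit (sub2 M i j q.1 q.2)) with hS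
  set S' : Finset (Fin s × Fin s) :=
    Finset.univ.filter (fun q => q.2 < q.1 ∧ IsUnit (sub2 M i j q.1 q.2)) with hS'
  -- T is the symmetric difference of P and Q
  have hTeq : T = (P \ Q) ∪ (Q \ P) := by
    ext q
    simp only [hT, hP, hQ, Finset.mem_union, Finset.mem_sdiff, Finset.mem_filter,
      Finset.mem_univ, true_and, key, Xor', Xor]
  have hdisj : Disjoint (P \ Q) (Q \ P) := disjoint_sdiff_sdiff
  have hTcard : T.card = (P \ Q).card + (Q \ P).card := by
    rw [hTeq, Finset.card_union_of_disjoint hdisj]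
  -- cards of P, Q, P ∩ Q
  have hPcard : P.card = xi * xj := by
    have : P = (Finset.univ.filter (fun k : Fin s => M i k = 1)) ×ˢ
        (Finset.univ.filter (fun k : Fin s => M j k = 1)) := by
      ext q
      simp [hP, Finset.mem_product]
    rw [this, Finset.card_product, hxi, hxj]
  have hQcard : Q.card = xj * xi := by
    have : Q = (Finset.univ.filter (fun k : Fin s => M j k = 1)) ×ˢ
        (Finset.univ.filter (fun k : Fin s => M i k = 1)) := by
      ext q
      simp [hQ, Finset.mem_product]
      tauto
    rw [this, Finset.card_product, hxi, hxj]
  have hPQcard : (P ∩ Q).card = z * z := by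
    have : P ∩ Q = (Finset.univ.filter (fun k : Fin s => M i k = 1 ∧ M j k = 1)) ×ˢ
        (Finset.univ.filter (fun k : Fin s => M i k = 1 ∧ M j k = 1)) := by
      ext q
      simp [hP, hQ, Finset.mem_product]
      tauto
    rw [this, Finset.card_product, hz]
  have hQPcard : (Q ∩ P).card = z * z := by rw [Finset.inter_comm]; exact hPQcard
  have h1 : (P \ Q).card + (P ∩ Q).card = P.card := Finset.card_sdiff_add_card_inter P Q
  have h2 : (Q \ P).card + (Q ∩ P).card = Q.card := Finset.card_sdiff_add_card_inter Q P
  -- T splits into S and S'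
  have hnotdiag : ∀ k : Fin s, ¬ IsUnit (sub2 M i j k k) := by
    intro k h
    rw [key] at h
    simp [Xor'] at h
  have hTsplit : T = S ∪ S' := by
    ext q
    simp only [hT, hS, hS', Finset.mem_union, Finset.mem_filter, Finset.mem_univ, true_and]
    constructor
    · intro h
      rcases lt_trichotomy q.1 q.2 with hlt | heq | hgt
      · exact Or.inl ⟨hlt, h⟩
      · exact absurd h (by
          have := hnotdiag q.1
          rw [heq] at this ⊢
          exact this)
      · exact Or.inr ⟨hgt, h⟩
    · rintro (⟨_, h⟩ | ⟨_, h⟩) <;> exact h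
  have hSS'disj : Disjoint S S' := by
    rw [Finset.disjoint_left]
    intro q hq hq'
    simp only [hS, hS', Finset.mem_filter] at hq hq'
    exact absurd hq'.2.1 (not_lt_of_gt hq.2.1)
  have hsymm : ∀ k l : Fin s, IsUnit (sub2 M i j k l) ↔ IsUnit (sub2 M i j l k) := by
    intro k l
    rw [key, key]; simp only [Xor']; rw [_root_.xor_comm]
  have hS'card : S'.card = S.card := by
    apply Finset.card_bij (fun q _ => q.swap)
    · intro q hq
      simp only [hS', Finset.mem_filter, Finset.mem_univ, true_and] at hq
      simp only [hS, Finset.mem_filter, Finset.mem_univ, true_and, Prod.fst_swap, Prod.snd_swap]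
      exact ⟨hq.1, (hsymm q.1 q.2).mp hq.2⟩
    · intro a _ b _ h
      exact Prod.swap_injective h
    · intro q hq
      simp only [hS, Finset.mem_filter, Finset.mem_univ, true_and] at hq
      refine ⟨q.swap, ?_, (Prod.swap_swap q).symm⟩
      simp only [hS', Finset.mem_filter, Finset.mem_univ, true_and, Prod.fst_swap, Prod.snd_swap]
      exact ⟨hq.1, (hsymm q.2 q.1).mpr hq.2⟩
  have hT2S : T.card = 2 * S.card := by
    rw [hTsplit, Finset.card_union_of_disjoint hSS'disj, hS'card]; ring
  -- put together
  have hfinal : 2 * S.card + 2 * (z * z) = xi * xj + xj * xi := by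
    have := hTcard
    omega
  have : ((2 : ℤ)) * S.card + 2 * ((z : ℤ) * z) = (xi : ℤ) * xj + (xj : ℤ) * xi := by
    exact_mod_cast congrArg (Nat.cast : ℕ → ℤ) hfinal
  rw [hS] at this ⊢
  push_cast at this ⊢
  linarith
end
end

section
/- Let M be an s×s matrix over 𝔽₂. For each row i let x_i be the number of ones in row i, and for rows i < j let z_{i,j} = |{k : M(i,k) = M(j,k) = 1}|. Then N₂(M) = Σ_{1 ≤ i < j ≤ s} (x_i·x_j − z_{i,j}²). -/
open scoped Classical

noncomputable section

lemma point (a b c d : ZMod 2) :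
    (if IsUnit !![a,b;c,d] then (1:ℤ) else 0) =
    (if a=1 then (1:ℤ) else 0)*(if d=1 then 1 else 0) + (if b=1 then 1 else 0)*(if c=1 then 1 else 0)
    - 2*((if a=1 then (1:ℤ) else 0)*(if c=1 then 1 else 0))*((if b=1 then 1 else 0)*(if d=1 then 1 else 0)) := by
  have h : ∀ x : ZMod 2, x = 0 ∨ x = 1 := by decide
  simp only [Matrix.isUnit_iff_isUnit_det, isUnit_iff_ne_zero, Matrix.det_fin_two_of]
  rcases h a with rfl|rfl <;> rcases h b with rfl|rfl <;> rcases h c with rfl|rfl <;> rcases h d with rfl|rfl <;> norm_num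

def f {s : ℕ} (M : Matrix (Fin s) (Fin s) (ZMod 2)) (i k : Fin s) : ℤ :=
  if M i k = 1 then 1 else 0

lemma ordered {s : ℕ} (M : Matrix (Fin s) (Fin s) (ZMod 2)) (i j : Fin s) :
    ∑ k : Fin s, ∑ l : Fin s, (if IsUnit (sub2 M i j k l) then (1:ℤ) else 0)
    = 2 * ((∑ k, f M i k) * (∑ k, f M j k) - (∑ k, f M i k * f M j k)^2) := by
  have h1 : ∀ k l : Fin s, (if IsUnit (sub2 M i j k l) then (1:ℤ) else 0) =
      f M i k * f M j l + f M i l * f M j k - 2*(f M i k * f M j k)*(f M i l * f M j l) := by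
    intro k l
    rw [sub2, point]
    rfl
  simp only [h1]
  simp only [Finset.sum_sub_distrib, Finset.sum_add_distrib, ← Finset.mul_sum, ← Finset.sum_mul]
  ring

lemma symmU {s : ℕ} (M : Matrix (Fin s) (Fin s) (ZMod 2)) (i j k l : Fin s) :
    IsUnit (sub2 M i j l k) ↔ IsUnit (sub2 M i j k l) := by
  simp only [sub2, Matrix.isUnit_iff_isUnit_det, isUnit_iff_ne_zero, Matrix.det_fin_two_of]
  constructor <;> intro h h' <;> apply h <;> linear_combination -h'

lemma diagU {s : ℕ} (M : Matrix (Fin s) (Fin s) (ZMod 2)) (i j k : Fin s) :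
    ¬ IsUnit (sub2 M i j k k) := by
  simp only [sub2, Matrix.isUnit_iff_isUnit_det, isUnit_iff_ne_zero, Matrix.det_fin_two_of]
  simp [mul_comm]

lemma unordered {s : ℕ} (M : Matrix (Fin s) (Fin s) (ZMod 2)) (i j : Fin s) :
    2 * (∑ k : Fin s, ∑ l : Fin s,
        (if k < l ∧ IsUnit (sub2 M i j k l) then (1:ℤ) else 0))
    = 2 * ((∑ k, f M i k) * (∑ k, f M j k) - (∑ k, f M i k * f M j k)^2) := by
  rw [← ordered M i j, two_mul]
  nth_rewrite 2 [Finset.sum_comm]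
  rw [← Finset.sum_add_distrib]
  apply Finset.sum_congr rfl
  intro k _
  rw [← Finset.sum_add_distrib]
  apply Finset.sum_congr rfl
  intro l _
  rcases lt_trichotomy k l with h|h|h
  · simp [h, not_lt.2 h.le, symmU M i j k l, h.ne']
  · subst h; simp [diagU M i j k, lt_irrefl]
  · simp [h, not_lt.2 h.le, symmU M i j k l, h.ne']

theorem N2_eq_sum (s : ℕ) (M : Matrix (Fin s) (Fin s) (ZMod 2))
    (x : Fin s → ℕ) (hx : ∀ i, x i = (Finset.univ.filter (fun k : Fin s => M i k = 1)).card)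
    (z : Fin s → Fin s → ℕ)
    (hz : ∀ i j, z i j = (Finset.univ.filter (fun k : Fin s => M i k = 1 ∧ M j k = 1)).card) :
    (N2 M : ℤ) =
      ∑ q ∈ Finset.univ.filter (fun q : Fin s × Fin s => q.1 < q.2),
        ((x q.1 : ℤ) * (x q.2 : ℤ) - (z q.1 q.2 : ℤ) ^ 2) := by
  have hxf : ∀ i, (x i : ℤ) = ∑ k, f M i k := by
    intro i
    rw [hx, Finset.card_filter]
    push_cast
    rfl
  have hzf : ∀ i j, (z i j : ℤ) = ∑ k, f M i k * f M j k := by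
    intro i j
    rw [hz, Finset.card_filter]
    push_cast
    apply Finset.sum_congr rfl
    intro k _
    by_cases h1 : M i k = 1 <;> by_cases h2 : M j k = 1 <;> simp [f, h1, h2]
  rw [N2, Finset.card_filter, Finset.sum_filter]
  push_cast
  simp only [Fintype.sum_prod_type]
  apply Finset.sum_congr rfl; intro i _
  apply Finset.sum_congr rfl; intro j _
  by_cases hij : i < j
  · simp only [hij, if_true, true_and]
    have : ∑ k : Fin s, ∑ l : Fin s,
        (if k < l ∧ IsUnit (sub2 M i j k l) then (1:ℤ) else 0)
        = (∑ k, f M i k) * (∑ k, f M j k) - (∑ k, f M i k * f M j k)^2 :=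
      mul_left_cancel₀ two_ne_zero (unordered M i j)
    rw [hxf, hxf, hzf]
    exact this
  · simp [hij]

end
end

section
/- Let M be a random s×s Bernoulli(√2/2) matrix over 𝔽₂. Let two 2×2 submatrices of M (determined by row pairs {i₁,j₁}, {i₂,j₂} and column pairs {k₁,l₁}, {k₂,l₂}) share exactly one common entry position. Then the event that the first submatrix is invertible over 𝔽₂ and the event that the second submatrix is invertible over 𝔽₂ are independent, each having probability 1/2. -/
open scoped Classical

noncomputable section

/-- The probability of a given matrix `M` under the Bernoulli(p) distribution in which
all entries are mutually independent, each equal to 1 with probability `p`. -/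
def bernoulliProb {s : ℕ} (p : ℝ) (M : Matrix (Fin s) (Fin s) (ZMod 2)) : ℝ :=
  ∏ i : Fin s, ∏ j : Fin s, if M i j = 1 then p else 1 - p

/-- The probability of an event `E` on `s × s` matrices over `𝔽₂` under the
Bernoulli(p) distribution. -/
def eventProb (s : ℕ) (p : ℝ) (E : Matrix (Fin s) (Fin s) (ZMod 2) → Prop) : ℝ :=
  ∑ M ∈ Finset.univ.filter (fun M => E M), bernoulliProb p M

namespace OCE

def w (p : ℝ) (x : ZMod 2) : ℝ := if x = 1 then p else 1 - p

lemma sum_zmod2 (f : ZMod 2 → ℝ) : ∑ x : ZMod 2, f x = f 0 + f 1 := by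
  have : (Finset.univ : Finset (ZMod 2)) = {0, 1} := by decide
  rw [this]
  simp

lemma sum_w (p : ℝ) : ∑ x : ZMod 2, w p x = 1 := by
  rw [sum_zmod2]; simp [w]

lemma L0 (p : ℝ) {ι : Type*} [Fintype ι] [DecidableEq ι] :
    ∑ v : ι → ZMod 2, ∏ i, w p (v i) = 1 := by
  rw [← Fintype.prod_sum]
  simp [sum_w]

/-- transfer lemma -/
lemma transfer (p : ℝ) {ι κ : Type*} [Fintype ι] [DecidableEq ι] [Fintype κ] [DecidableEq κ]
    (q : ι → κ) (hq : Function.Injective q) (F : (ι → ZMod 2) → ℝ) :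
    ∑ g : κ → ZMod 2, F (g ∘ q) * ∏ k, w p (g k)
      = ∑ v : ι → ZMod 2, F v * ∏ i, w p (v i) := by
  classical
  let e := Equiv.piEquivPiSubtypeProd (fun k => k ∈ Set.range q) (fun _ : κ => ZMod 2)
  rw [← Equiv.sum_comp e.symm, Fintype.sum_prod_type]
  have key : ∀ (a : {k : κ // k ∈ Set.range q} → ZMod 2)
      (b : {k : κ // ¬ k ∈ Set.range q} → ZMod 2),
      F (e.symm (a, b) ∘ q) * ∏ k, w p (e.symm (a, b) k)
        = (F (fun i => a ⟨q i, Set.mem_range_self i⟩) * ∏ j, w p (a j)) * ∏ j, w p (b j) := by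
    intro a b
    have hval : ∀ (k : κ) (h : k ∈ Set.range q), e.symm (a, b) k = a ⟨k, h⟩ := by
      intro k h
      show (if h' : k ∈ Set.range q then a ⟨k, h'⟩ else b ⟨k, h'⟩) = a ⟨k, h⟩
      rw [dif_pos h]
    have hval' : ∀ (k : κ) (h : ¬ k ∈ Set.range q), e.symm (a, b) k = b ⟨k, h⟩ := by
      intro k h
      show (if h' : k ∈ Set.range q then a ⟨k, h'⟩ else b ⟨k, h'⟩) = b ⟨k, h⟩
      rw [dif_neg h]
    have h1 : F (e.symm (a, b) ∘ q) = F (fun i => a ⟨q i, Set.mem_range_self i⟩) := by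
      congr 1
      funext i
      exact hval _ (Set.mem_range_self i)
    have h2 : (∏ k, w p (e.symm (a, b) k)) = (∏ j, w p (a j)) * ∏ j, w p (b j) := by
      rw [← Fintype.prod_subtype_mul_prod_subtype (fun k => k ∈ Set.range q)
        (fun k => w p (e.symm (a, b) k))]
      congr 1
      · exact Finset.prod_congr (by ext x; simp) fun j _ => by rw [hval j.1 j.2]
      · exact Finset.prod_congr (by ext x; simp) fun j _ => by rw [hval' j.1 j.2]
    rw [h1, h2]
    ring
  simp only [key]
  simp only [← Finset.mul_sum]
  rw [L0]
  simp only [mul_one]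

  refine Fintype.sum_equiv
    (Equiv.arrowCongr (Equiv.ofInjective q hq) (Equiv.refl (ZMod 2))).symm _ _ fun a => ?_
  have hcoe : ∀ i : ι, ((Equiv.ofInjective q hq) i : κ) = q i := fun i => rfl
  have harg : (fun i => a ⟨q i, Set.mem_range_self i⟩)
      = ((Equiv.arrowCongr (Equiv.ofInjective q hq) (Equiv.refl (ZMod 2))).symm a) := by
    funext i
    show a ⟨q i, Set.mem_range_self i⟩ = a ((Equiv.ofInjective q hq) i)
    rfl
  rw [← harg]
  congr 1
  rw [← Equiv.prod_comp (Equiv.ofInjective q hq) (fun j => w p (a j))]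
  refine Finset.prod_congr rfl fun i _ => ?_
  show w p (a ((Equiv.ofInjective q hq) i))
      = w p (((Equiv.arrowCongr (Equiv.ofInjective q hq) (Equiv.refl (ZMod 2))).symm a) i)
  rfl

def E (p : ℝ) (n : ℕ) (F : (Fin n → ZMod 2) → ℝ) : ℝ :=
  ∑ v : Fin n → ZMod 2, F v * ∏ i, w p (v i)

lemma E_zero (p : ℝ) (F : (Fin 0 → ZMod 2) → ℝ) : E p 0 F = F ![] := by
  rw [E]
  rw [Fintype.sum_unique]
  simp
  congr

lemma E_succ (p : ℝ) (n : ℕ) (F : (Fin (n+1) → ZMod 2) → ℝ) :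
    E p (n+1) F = ∑ x : ZMod 2, w p x * E p n (fun u => F (Fin.cons x u)) := by
  rw [E]
  rw [← Equiv.sum_comp (Fin.consEquiv fun _ : Fin (n+1) => ZMod 2)]
  rw [Fintype.sum_prod_type]
  refine Finset.sum_congr rfl fun x _ => ?_
  rw [E, Finset.mul_sum]
  refine Finset.sum_congr rfl fun u _ => ?_
  rw [show ((Fin.consEquiv fun _ : Fin (n+1) => ZMod 2) (x, u)) = Fin.cons x u from rfl]
  rw [Fin.prod_univ_succ]
  simp only [Fin.cons_zero, Fin.cons_succ]
  ring

lemma E_split (p : ℝ) (m n : ℕ) (f : (Fin m → ZMod 2) → ℝ) (g : (Fin n → ZMod 2) → ℝ) :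
    E p (m + n) (fun v => f (v ∘ Fin.castAdd n) * g (v ∘ Fin.natAdd m))
      = E p m f * E p n g := by
  classical
  let e : ((Fin m → ZMod 2) × (Fin n → ZMod 2)) ≃ (Fin (m + n) → ZMod 2) :=
    { toFun := fun fg => Fin.append fg.1 fg.2
      invFun := fun v => (v ∘ Fin.castAdd n, v ∘ Fin.natAdd m)
      left_inv := by
        rintro ⟨a, b⟩
        ext i
        · exact Fin.append_left a b i
        · exact Fin.append_right a b i
      right_inv := by
        intro v
        exact Fin.append_castAdd_natAdd }
  have he : ∀ fg : (Fin m → ZMod 2) × (Fin n → ZMod 2),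
      e fg = Fin.append fg.1 fg.2 := fun _ => rfl
  rw [E, ← Equiv.sum_comp e, Fintype.sum_prod_type]
  rw [E, E, Finset.sum_mul_sum]
  refine Finset.sum_congr rfl fun a _ => Finset.sum_congr rfl fun b _ => ?_
  rw [he (a, b), Fin.prod_univ_add]
  have h1 : (Fin.append a b ∘ Fin.castAdd n) = a := by
    funext i; simp [Fin.append_left]
  have h2 : (Fin.append a b ∘ Fin.natAdd m) = b := by
    funext i; simp [Fin.append_right]
  have h3 : ∀ i : Fin m, Fin.append a b (Fin.castAdd n i) = a i := fun i => Fin.append_left a b i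
  have h4 : ∀ i : Fin n, Fin.append a b (Fin.natAdd m i) = b i := fun i => Fin.append_right a b i
  simp only [h1, h2, h3, h4]
  ring


lemma E3_expand (p : ℝ) (F : (Fin 3 → ZMod 2) → ℝ) :
    E p 3 F = ∑ a : ZMod 2, w p a * ∑ b : ZMod 2, w p b * ∑ c : ZMod 2, w p c * F ![a, b, c] := by
  refine (E_succ p 2 F).trans (Finset.sum_congr rfl fun a _ => ?_)
  congr 1
  refine (E_succ p 1 _).trans (Finset.sum_congr rfl fun b _ => ?_)
  congr 1
  refine (E_succ p 0 _).trans (Finset.sum_congr rfl fun c _ => ?_)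
  congr 1
  exact E_zero p _

lemma claimC (p : ℝ) (hp : p * p = 1/2) (x : ZMod 2) :
    E p 3 (fun u => if x * u 2 + u 0 * u 1 = 1 then (1:ℝ) else 0) = 1/2 := by
  rw [E3_expand]
  simp only [sum_zmod2, Matrix.cons_val_zero, Matrix.cons_val_one, Matrix.head_cons,
    Matrix.cons_val_two, Matrix.vecTail, Matrix.vecHead, Function.comp]
  rcases (by decide : ∀ y : ZMod 2, y = 0 ∨ y = 1) x with h | h <;> subst h <;>
      simp (config := { decide := true }) only [w, if_true, if_false] <;> ring_nf
  · linear_combination hp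
  · linear_combination (1 - 2*p) * hp

lemma marginal (p : ℝ) (hp : p * p = 1/2) :
    E p 4 (fun v => if v 0 * v 3 + v 1 * v 2 = 1 then (1:ℝ) else 0) = 1/2 := by
  refine (E_succ p 3 _).trans ?_
  have step : (∑ x : ZMod 2, w p x * (1/2 : ℝ)) = 1/2 := by
    rw [← Finset.sum_mul, sum_w, one_mul]
  refine Eq.trans ?_ step
  exact Finset.sum_congr rfl fun x _ => congrArg (w p x * ·) (claimC p hp x)

lemma joint (p : ℝ) (hp : p * p = 1/2) :
    E p 7 (fun v => (if v 0 * v 3 + v 1 * v 2 = 1 then (1:ℝ) else 0) *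
      (if v 0 * v 6 + v 4 * v 5 = 1 then (1:ℝ) else 0)) = 1/4 := by
  have key : ∀ x : ZMod 2,
      E p (3+3) (fun u =>
        (fun a : Fin 3 → ZMod 2 => if x * a 2 + a 0 * a 1 = 1 then (1:ℝ) else 0)
          (u ∘ Fin.castAdd 3) *
        (fun a : Fin 3 → ZMod 2 => if x * a 2 + a 0 * a 1 = 1 then (1:ℝ) else 0)
          (u ∘ Fin.natAdd 3)) = 1/4 := by
    intro x
    rw [E_split p 3 3 (fun a : Fin 3 → ZMod 2 => if x * a 2 + a 0 * a 1 = 1 then (1:ℝ) else 0)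
      (fun a : Fin 3 → ZMod 2 => if x * a 2 + a 0 * a 1 = 1 then (1:ℝ) else 0), claimC p hp x]
    norm_num
  refine (E_succ p 6 _).trans ?_
  have step : (∑ x : ZMod 2, w p x * (1/4 : ℝ)) = 1/4 := by
    rw [← Finset.sum_mul, sum_w, one_mul]
  refine Eq.trans ?_ step
  exact Finset.sum_congr rfl fun x _ => congrArg (w p x * ·) (key x)


lemma inj4 {α β : Type*} {r rA : α} {c cA : β} (h1 : rA ≠ r) (h2 : cA ≠ c) :
    Function.Injective (![(r,c),(r,cA),(rA,c),(rA,cA)] : Fin 4 → α × β) := by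
  intro a b hab
  fin_cases a <;> fin_cases b <;> simp_all [Prod.ext_iff]

lemma inj7 {α β : Type*} {r rA rB : α} {c cA cB : β} (h1 : rA ≠ r) (h2 : rB ≠ r) (h3 : rA ≠ rB)
    (h4 : cA ≠ c) (h5 : cB ≠ c) (h6 : cA ≠ cB) :
    Function.Injective
      (![(r,c),(r,cA),(rA,c),(rA,cA),(r,cB),(rB,c),(rB,cB)] : Fin 7 → α × β) := by
  refine List.nodup_ofFn.mp ?_
  simp only [List.ofFn_succ, Fin.succ_zero_eq_one, List.ofFn_zero, Matrix.cons_val_zero,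
    Matrix.cons_val_succ, List.nodup_cons, List.mem_cons, List.not_mem_nil, Prod.mk.injEq,
    not_or, List.mem_singleton, List.nodup_nil, and_true]
  refine ⟨?_,?_,?_,?_,?_,?_⟩ <;> push_neg <;> try tauto

lemma eventProb_eq (s : ℕ) (p : ℝ) (E : Matrix (Fin s) (Fin s) (ZMod 2) → Prop) :
    eventProb s p E = ∑ g : Fin s × Fin s → ZMod 2,
      (if E (Matrix.of fun i j => g (i, j)) then (1:ℝ) else 0) * ∏ k, w p (g k) := by
  classical
  rw [eventProb, Finset.sum_filter]
  refine Fintype.sum_equiv (Equiv.curry (Fin s) (Fin s) (ZMod 2)).symm _ _ fun M => ?_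
  have hb : bernoulliProb p M = ∏ k, w p ((Equiv.curry (Fin s) (Fin s) (ZMod 2)).symm M k) := by
    rw [show bernoulliProb p M = ∏ i : Fin s, ∏ j : Fin s, w p (M i j) from rfl,
      ← Fintype.prod_prod_type' (fun i j => w p (M i j))]
    exact Finset.prod_congr rfl fun k _ => rfl
  by_cases hE : E M
  · have hE' : E (Matrix.of fun i j => (Equiv.curry (Fin s) (Fin s) (ZMod 2)).symm M (i, j)) := hE
    rw [if_pos hE, if_pos hE', hb, one_mul]
  · have hE' : ¬ E (Matrix.of fun i j => (Equiv.curry (Fin s) (Fin s) (ZMod 2)).symm M (i, j)) := hE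
    rw [if_neg hE, if_neg hE', zero_mul]

end OCE

open OCE in
theorem one_common_entry_independent (s : ℕ)
    (i₁ j₁ k₁ l₁ i₂ j₂ k₂ l₂ : Fin s)
    (h₁r : i₁ < j₁) (h₁c : k₁ < l₁) (h₂r : i₂ < j₂) (h₂c : k₂ < l₂)
    (hrow : (({i₁, j₁} : Finset (Fin s)) ∩ {i₂, j₂}).card = 1)
    (hcol : (({k₁, l₁} : Finset (Fin s)) ∩ {k₂, l₂}).card = 1) :
    eventProb s (Real.sqrt 2 / 2)
        (fun M => IsUnit (sub2 M i₁ j₁ k₁ l₁) ∧ IsUnit (sub2 M i₂ j₂ k₂ l₂)) =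
      eventProb s (Real.sqrt 2 / 2) (fun M => IsUnit (sub2 M i₁ j₁ k₁ l₁)) *
        eventProb s (Real.sqrt 2 / 2) (fun M => IsUnit (sub2 M i₂ j₂ k₂ l₂)) ∧
    eventProb s (Real.sqrt 2 / 2) (fun M => IsUnit (sub2 M i₁ j₁ k₁ l₁)) = 1 / 2 ∧
    eventProb s (Real.sqrt 2 / 2) (fun M => IsUnit (sub2 M i₂ j₂ k₂ l₂)) = 1 / 2 := by
  classical
  have hp : (Real.sqrt 2 / 2) * (Real.sqrt 2 / 2) = 1/2 := by
    rw [div_mul_div_comm, Real.mul_self_sqrt (by norm_num : (0:ℝ) ≤ 2)]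
    norm_num
  set p := Real.sqrt 2 / 2 with hpd
  obtain ⟨r, hr⟩ := Finset.card_eq_one.mp hrow
  obtain ⟨c, hc⟩ := Finset.card_eq_one.mp hcol
  have hrmem : r ∈ ({i₁, j₁} : Finset (Fin s)) ∩ {i₂, j₂} := hr ▸ Finset.mem_singleton_self r
  have hcmem : c ∈ ({k₁, l₁} : Finset (Fin s)) ∩ {k₂, l₂} := hc ▸ Finset.mem_singleton_self c
  have hr1 : r = i₁ ∨ r = j₁ := by
    have := (Finset.mem_inter.mp hrmem).1; simpa using this
  have hr2 : r = i₂ ∨ r = j₂ := by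
    have := (Finset.mem_inter.mp hrmem).2; simpa using this
  have hc1 : c = k₁ ∨ c = l₁ := by
    have := (Finset.mem_inter.mp hcmem).1; simpa using this
  have hc2 : c = k₂ ∨ c = l₂ := by
    have := (Finset.mem_inter.mp hcmem).2; simpa using this
  have hne1 : i₁ ≠ j₁ := ne_of_lt h₁r
  have hne2 : i₂ ≠ j₂ := ne_of_lt h₂r
  have hnc1 : k₁ ≠ l₁ := ne_of_lt h₁c
  have hnc2 : k₂ ≠ l₂ := ne_of_lt h₂c
  obtain ⟨rA, hrAne, hrAmem, hD1row⟩ :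
      ∃ rA, rA ≠ r ∧ rA ∈ ({i₁, j₁} : Finset (Fin s)) ∧
        ∀ (M : Matrix (Fin s) (Fin s) (ZMod 2)) (x y : Fin s),
          M i₁ x * M j₁ y + M i₁ y * M j₁ x = M r x * M rA y + M r y * M rA x := by
    rcases hr1 with h | h
    · exact ⟨j₁, fun e => hne1 (h ▸ e.symm), by simp, fun M x y => by rw [h]⟩
    · exact ⟨i₁, fun e => hne1 (h ▸ e), by simp, fun M x y => by rw [h]; ring⟩
  obtain ⟨rB, hrBne, hrBmem, hD2row⟩ :
      ∃ rB, rB ≠ r ∧ rB ∈ ({i₂, j₂} : Finset (Fin s)) ∧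
        ∀ (M : Matrix (Fin s) (Fin s) (ZMod 2)) (x y : Fin s),
          M i₂ x * M j₂ y + M i₂ y * M j₂ x = M r x * M rB y + M r y * M rB x := by
    rcases hr2 with h | h
    · exact ⟨j₂, fun e => hne2 (h ▸ e.symm), by simp, fun M x y => by rw [h]⟩
    · exact ⟨i₂, fun e => hne2 (h ▸ e), by simp, fun M x y => by rw [h]; ring⟩
  obtain ⟨cA, hcAne, hcAmem, hD1col⟩ :
      ∃ cA, cA ≠ c ∧ cA ∈ ({k₁, l₁} : Finset (Fin s)) ∧
        ∀ (M : Matrix (Fin s) (Fin s) (ZMod 2)) (a b : Fin s),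
          M a k₁ * M b l₁ + M a l₁ * M b k₁ = M a c * M b cA + M a cA * M b c := by
    rcases hc1 with h | h
    · exact ⟨l₁, fun e => hnc1 (h ▸ e.symm), by simp, fun M a b => by rw [h]⟩
    · exact ⟨k₁, fun e => hnc1 (h ▸ e), by simp, fun M a b => by rw [h]; ring⟩
  obtain ⟨cB, hcBne, hcBmem, hD2col⟩ :
      ∃ cB, cB ≠ c ∧ cB ∈ ({k₂, l₂} : Finset (Fin s)) ∧
        ∀ (M : Matrix (Fin s) (Fin s) (ZMod 2)) (a b : Fin s),
          M a k₂ * M b l₂ + M a l₂ * M b k₂ = M a c * M b cB + M a cB * M b c := by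
    rcases hc2 with h | h
    · exact ⟨l₂, fun e => hnc2 (h ▸ e.symm), by simp, fun M a b => by rw [h]⟩
    · exact ⟨k₂, fun e => hnc2 (h ▸ e), by simp, fun M a b => by rw [h]; ring⟩
  have hrAB : rA ≠ rB := by
    intro e
    have : rA ∈ ({i₁, j₁} : Finset (Fin s)) ∩ {i₂, j₂} :=
      Finset.mem_inter.mpr ⟨hrAmem, e ▸ hrBmem⟩
    rw [hr, Finset.mem_singleton] at this
    exact hrAne this
  have hcAB : cA ≠ cB := by
    intro e
    have : cA ∈ ({k₁, l₁} : Finset (Fin s)) ∩ {k₂, l₂} :=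
      Finset.mem_inter.mpr ⟨hcAmem, e ▸ hcBmem⟩
    rw [hc, Finset.mem_singleton] at this
    exact hcAne this
  -- determinant descriptions
  have hdet1 : ∀ g : Fin s × Fin s → ZMod 2,
      IsUnit (sub2 (Matrix.of fun i j => g (i, j)) i₁ j₁ k₁ l₁) ↔
        g (r, c) * g (rA, cA) + g (r, cA) * g (rA, c) = 1 := by
    intro g
    have hd : (sub2 (Matrix.of fun i j => g (i, j)) i₁ j₁ k₁ l₁).det
        = g (r, c) * g (rA, cA) + g (r, cA) * g (rA, c) := by
      simp only [sub2, Matrix.det_fin_two_of]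
      rw [(by decide : ∀ a b : ZMod 2, a - b = a + b) _ _]
      exact (hD1row (Matrix.of fun i j => g (i, j)) k₁ l₁).trans
        (hD1col (Matrix.of fun i j => g (i, j)) r rA)
    rw [Matrix.isUnit_iff_isUnit_det, hd, isUnit_iff_ne_zero]
    exact (by decide : ∀ z : ZMod 2, z ≠ 0 ↔ z = 1) _
  have hdet2 : ∀ g : Fin s × Fin s → ZMod 2,
      IsUnit (sub2 (Matrix.of fun i j => g (i, j)) i₂ j₂ k₂ l₂) ↔
        g (r, c) * g (rB, cB) + g (r, cB) * g (rB, c) = 1 := by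
    intro g
    have hd : (sub2 (Matrix.of fun i j => g (i, j)) i₂ j₂ k₂ l₂).det
        = g (r, c) * g (rB, cB) + g (r, cB) * g (rB, c) := by
      simp only [sub2, Matrix.det_fin_two_of]
      rw [(by decide : ∀ a b : ZMod 2, a - b = a + b) _ _]
      exact (hD2row (Matrix.of fun i j => g (i, j)) k₂ l₂).trans
        (hD2col (Matrix.of fun i j => g (i, j)) r rB)
    rw [Matrix.isUnit_iff_isUnit_det, hd, isUnit_iff_ne_zero]
    exact (by decide : ∀ z : ZMod 2, z ≠ 0 ↔ z = 1) _
  -- injective position maps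
  have hq1 : Function.Injective
      (![(r, c), (r, cA), (rA, c), (rA, cA)] : Fin 4 → Fin s × Fin s) :=
    inj4 hrAne hcAne
  have hq2 : Function.Injective
      (![(r, c), (r, cB), (rB, c), (rB, cB)] : Fin 4 → Fin s × Fin s) :=
    inj4 hrBne hcBne
  have hq7 : Function.Injective
      (![(r, c), (r, cA), (rA, c), (rA, cA), (r, cB), (rB, c), (rB, cB)] :
        Fin 7 → Fin s × Fin s) :=
    inj7 hrAne hrBne hrAB hcAne hcBne hcAB
  -- marginal probabilities
  have P1 : eventProb s p (fun M => IsUnit (sub2 M i₁ j₁ k₁ l₁)) = 1/2 := by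
    rw [eventProb_eq]
    refine Eq.trans (Finset.sum_congr rfl fun g _ => ?_)
      ((transfer p (![(r, c), (r, cA), (rA, c), (rA, cA)] : Fin 4 → Fin s × Fin s) hq1
        (fun v => if v 0 * v 3 + v 1 * v 2 = 1 then (1:ℝ) else 0)).trans (marginal p hp))
    refine congrArg (· * ∏ k, w p (g k)) ?_
    simp only [hdet1 g]
    rfl
  have P2 : eventProb s p (fun M => IsUnit (sub2 M i₂ j₂ k₂ l₂)) = 1/2 := by
    rw [eventProb_eq]
    refine Eq.trans (Finset.sum_congr rfl fun g _ => ?_)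
      ((transfer p (![(r, c), (r, cB), (rB, c), (rB, cB)] : Fin 4 → Fin s × Fin s) hq2
        (fun v => if v 0 * v 3 + v 1 * v 2 = 1 then (1:ℝ) else 0)).trans (marginal p hp))
    refine congrArg (· * ∏ k, w p (g k)) ?_
    simp only [hdet2 g]
    rfl
  have P12 : eventProb s p
      (fun M => IsUnit (sub2 M i₁ j₁ k₁ l₁) ∧ IsUnit (sub2 M i₂ j₂ k₂ l₂)) = 1/4 := by
    rw [eventProb_eq]
    refine Eq.trans (Finset.sum_congr rfl fun g _ => ?_)
      ((transfer p
        (![(r, c), (r, cA), (rA, c), (rA, cA), (r, cB), (rB, c), (rB, cB)] :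
          Fin 7 → Fin s × Fin s) hq7
        (fun v => (if v 0 * v 3 + v 1 * v 2 = 1 then (1:ℝ) else 0) *
          (if v 0 * v 6 + v 4 * v 5 = 1 then (1:ℝ) else 0))).trans (joint p hp))
    refine congrArg (· * ∏ k, w p (g k)) ?_
    simp only [hdet1 g, hdet2 g]
    by_cases hA : g (r, c) * g (rA, cA) + g (r, cA) * g (rA, c) = 1 <;>
      by_cases hB : g (r, c) * g (rB, cB) + g (r, cB) * g (rB, c) = 1 <;>
        simp [hA, hB, Function.comp, Matrix.cons_val_zero, Matrix.cons_val_one,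
          Matrix.head_cons, Matrix.cons_val_succ,
          show (![(r, c), (r, cA), (rA, c), (rA, cA), (r, cB), (rB, c), (rB, cB)] :
            Fin 7 → Fin s × Fin s) 5 = (rB, c) from rfl,
          show (![(r, c), (r, cA), (rA, c), (rA, cA), (r, cB), (rB, c), (rB, cB)] :
            Fin 7 → Fin s × Fin s) 6 = (rB, cB) from rfl]
  exact ⟨by rw [P12, P1, P2]; norm_num, P1, P2⟩
end
end

section
/- For every s ≥ 1 and every s×s matrix M over 𝔽₂, there exists an invertible s×s matrix N over 𝔽₂ such that N(i,j) = M(i,j) for all i ≠ j; that is, any binary matrix can be made invertible by modifying only entries on its main diagonal. -/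
open Matrix Fin

theorem exists_invertible_diagonal_adjust_aux (s : ℕ)
    (M : Matrix (Fin s) (Fin s) (ZMod 2)) :
    ∃ N : Matrix (Fin s) (Fin s) (ZMod 2), IsUnit N ∧ ∀ i j : Fin s, i ≠ j → N i j = M i j := by
  induction s with
  | zero =>
    refine ⟨M, ?_, fun i j _ => rfl⟩
    rw [Matrix.isUnit_iff_isUnit_det, Matrix.det_isEmpty]
    exact isUnit_one
  | succ s ih =>
    obtain ⟨A, hAu, hA⟩ := ih (M.submatrix Fin.castSucc Fin.castSucc)
    haveI : Invertible A := hAu.invertible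
    set B : Matrix (Fin s) (Fin 1) (ZMod 2) := fun i _ => M (Fin.castSucc i) (Fin.last s) with hB
    set C : Matrix (Fin 1) (Fin s) (ZMod 2) := fun _ j => M (Fin.last s) (Fin.castSucc j) with hC
    set D : Matrix (Fin 1) (Fin 1) (ZMod 2) := fun _ _ => 1 + (C * ⅟A * B) 0 0 with hD
    refine ⟨(Matrix.fromBlocks A B C D).submatrix finSumFinEquiv.symm finSumFinEquiv.symm,
      ?_, ?_⟩
    · rw [Matrix.isUnit_iff_isUnit_det, Matrix.det_submatrix_equiv_self,
        Matrix.det_fromBlocks₁₁]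
      have : ((D - C * ⅟A * B) : Matrix (Fin 1) (Fin 1) (ZMod 2)).det = 1 := by
        rw [Matrix.det_fin_one]
        rw [Matrix.sub_apply]
        simp [hD]
      rw [this, mul_one]
      exact (Matrix.isUnit_iff_isUnit_det A).mp hAu
    · intro i j hij
      have hsl : finSumFinEquiv.symm (Fin.last s) = Sum.inr 0 := by
        have h0 : (Fin.last s) = Fin.natAdd s (0 : Fin 1) := by
          ext; simp [Fin.last]
        rw [h0, finSumFinEquiv_symm_apply_natAdd]
      have hsc : ∀ a : Fin s, finSumFinEquiv.symm (Fin.castSucc a) = Sum.inl a := by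
        intro a
        have : (Fin.castSucc a : Fin (s + 1)) = Fin.castAdd 1 a := rfl
        rw [this, finSumFinEquiv_symm_apply_castAdd]
      rcases Fin.eq_castSucc_or_eq_last i with ⟨a, rfl⟩ | rfl
      · rcases Fin.eq_castSucc_or_eq_last j with ⟨b, rfl⟩ | rfl
        · have hab : a ≠ b := fun h => hij (by rw [h])
          simp only [Matrix.submatrix_apply, hsc, Matrix.fromBlocks_apply₁₁]
          exact hA a b hab
        · simp [Matrix.submatrix_apply, hsl, hsc, Matrix.fromBlocks_apply₁₂, hB]; rfl
      · rcases Fin.eq_castSucc_or_eq_last j with ⟨b, rfl⟩ | rfl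
        · simp [Matrix.submatrix_apply, hsl, hsc, Matrix.fromBlocks_apply₂₁, hC]; rfl
        · exact absurd rfl hij

theorem exists_invertible_diagonal_adjust (s : ℕ) (hs : 1 ≤ s)
    (M : Matrix (Fin s) (Fin s) (ZMod 2)) :
    ∃ N : Matrix (Fin s) (Fin s) (ZMod 2), IsUnit N ∧ ∀ i j : Fin s, i ≠ j → N i j = M i j := by
  exact exists_invertible_diagonal_adjust_aux s M
end
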